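/- For 0 ≤ s ≤ k < a, the sum f_{a,k,s}(ν) = Σ_{0≤j≤a} (q^s ν)^j (ν;q)_{a-j} (ν^{-1} q^{-k};q)_j binom_q(a,j) vanishes identically (as a rational function of ν and q). -/

import Mathlib

open scoped BigOperators

noncomputable section

/-- The q-Pochhammer symbol `(z;q)_m = ∏_{j=0}^{m-1} (1 - z q^j)`. -/
def qP (q z : ℝ) (m : ℕ) : ℝ := ∏ j ∈ Finset.range m, (1 - z * q ^ j)

/-- The q-binomial coefficient, zero outside `0 ≤ k ≤ m`. -/
def qBinom (q : ℝ) (m k : ℕ) : ℝ :=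
  if k ≤ m then qP q q m / (qP q q k * qP q q (m - k)) else 0


lemma qP_zero (q z : ℝ) : qP q z 0 = 1 := Finset.prod_range_zero _

lemma qP_succ_top (q z : ℝ) (m : ℕ) : qP q z (m+1) = qP q z m * (1 - z * q ^ m) :=
  Finset.prod_range_succ _ _

lemma qP_succ_bot (q z : ℝ) (m : ℕ) : qP q z (m+1) = (1 - z) * qP q (q*z) m := by
  rw [qP, Finset.prod_range_succ']
  simp only [pow_zero, mul_one]
  rw [mul_comm]
  congr 1
  exact Finset.prod_congr rfl fun i _ => by ring_nf

lemma fac_pos {q : ℝ} (hq0 : 0 < q) (hq1 : q < 1) (i : ℕ) : 0 < 1 - q * q ^ i := by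
  have : q * q ^ i ≤ q * 1 := mul_le_mul_of_nonneg_left (pow_le_one₀ hq0.le hq1.le) hq0.le
  nlinarith

lemma qP_q_pos {q : ℝ} (hq0 : 0 < q) (hq1 : q < 1) (m : ℕ) : 0 < qP q q m :=
  Finset.prod_pos fun i _ => fac_pos hq0 hq1 i

lemma qP_q_ne {q : ℝ} (hq0 : 0 < q) (hq1 : q < 1) (m : ℕ) : qP q q m ≠ 0 :=
  (qP_q_pos hq0 hq1 m).ne'

lemma qBinom_zero {q : ℝ} (hq0 : 0 < q) (hq1 : q < 1) (m : ℕ) : qBinom q m 0 = 1 := by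
  rw [qBinom, if_pos (Nat.zero_le m), qP_zero, one_mul, Nat.sub_zero,
    div_self (qP_q_ne hq0 hq1 m)]

lemma qBinom_of_gt (q : ℝ) {m k : ℕ} (h : m < k) : qBinom q m k = 0 := by
  rw [qBinom, if_neg (by omega)]

lemma qBinom_self {q : ℝ} (hq0 : 0 < q) (hq1 : q < 1) (m : ℕ) : qBinom q m m = 1 := by
  rw [qBinom, if_pos le_rfl, Nat.sub_self, qP_zero, mul_one, div_self (qP_q_ne hq0 hq1 m)]

lemma qBinom_pascal1 {q : ℝ} (hq0 : 0 < q) (hq1 : q < 1) (m j : ℕ) :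
    qBinom q (m+1) (j+1) = qBinom q m (j+1) + q ^ (m-j) * qBinom q m j := by
  rcases lt_trichotomy j m with h | rfl | h
  · obtain ⟨d, rfl⟩ : ∃ d, m = j + d + 1 := ⟨m - j - 1, by omega⟩
    rw [qBinom, if_pos (by omega), qBinom, if_pos (by omega), qBinom, if_pos (by omega)]
    have e1 : j + d + 1 + 1 - (j+1) = d + 1 := by omega
    have e2 : j + d + 1 - (j+1) = d := by omega
    have e3 : j + d + 1 - j = d + 1 := by omega
    rw [e1, e2, e3]
    rw [show j + d + 1 + 1 = (j+d+1)+1 from rfl, qP_succ_top q q (j+d+1),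
      qP_succ_top q q d, qP_succ_top q q j]
    have n1 := qP_q_ne hq0 hq1 (j+1)
    have n2 := qP_q_ne hq0 hq1 d
    have n3 := qP_q_ne hq0 hq1 j
    have n4 := (fac_pos hq0 hq1 d).ne'
    have n5 := (fac_pos hq0 hq1 j).ne'
    rw [qP_succ_top q q j] at n1
    field_simp
    ring
  · rw [qBinom_self hq0 hq1, qBinom_of_gt q (by omega), qBinom_self hq0 hq1, Nat.sub_self]
    ring
  · rw [qBinom_of_gt q (by omega), qBinom_of_gt q (by omega), qBinom_of_gt q h]
    ring

lemma qBinom_pascal2 {q : ℝ} (hq0 : 0 < q) (hq1 : q < 1) (m j : ℕ) :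
    qBinom q (m+1) (j+1) = q ^ (j+1) * qBinom q m (j+1) + qBinom q m j := by
  rcases lt_trichotomy j m with h | rfl | h
  · obtain ⟨d, rfl⟩ : ∃ d, m = j + d + 1 := ⟨m - j - 1, by omega⟩
    rw [qBinom, if_pos (by omega), qBinom, if_pos (by omega), qBinom, if_pos (by omega)]
    have e1 : j + d + 1 + 1 - (j+1) = d + 1 := by omega
    have e2 : j + d + 1 - (j+1) = d := by omega
    have e3 : j + d + 1 - j = d + 1 := by omega
    rw [e1, e2, e3]
    rw [show j + d + 1 + 1 = (j+d+1)+1 from rfl, qP_succ_top q q (j+d+1),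
      qP_succ_top q q d, qP_succ_top q q j]
    have n1 := qP_q_ne hq0 hq1 (j+1)
    have n2 := qP_q_ne hq0 hq1 d
    have n3 := qP_q_ne hq0 hq1 j
    have n4 := (fac_pos hq0 hq1 d).ne'
    have n5 := (fac_pos hq0 hq1 j).ne'
    rw [qP_succ_top q q j] at n1
    field_simp
    ring
  · rw [qBinom_self hq0 hq1, qBinom_of_gt q (by omega), qBinom_self hq0 hq1]
    ring
  · rw [qBinom_of_gt q (by omega), qBinom_of_gt q (by omega), qBinom_of_gt q h]
    ring

lemma partA {q ν : ℝ} (hq0 : 0 < q) (hq1 : q < 1) (a : ℕ) (c w : ℝ) :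
    (∑ j ∈ Finset.range (a+1),
      c^(j+1) * qP q ν (a-j) * qP q w (j+1) * qBinom q a (j+1)) + qP q ν (a+1)
    = (1-ν) * ∑ j ∈ Finset.range (a+1),
        c^j * qP q (q*ν) (a-j) * qP q w j * qBinom q a j := by
  rw [Finset.mul_sum, Finset.sum_range_succ' (fun j => (1-ν) * (c^j * qP q (q*ν) (a-j) * qP q w j * qBinom q a j)) a]
  rw [Finset.sum_range_succ]
  rw [qBinom_of_gt q (by omega : a < a + 1)]
  have h0 : (1-ν) * (c^0 * qP q (q*ν) (a-0) * qP q w 0 * qBinom q a 0)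
      = qP q ν (a+1) := by
    rw [pow_zero, qP_zero, qBinom_zero hq0 hq1, Nat.sub_zero, qP_succ_bot]
    ring
  rw [h0]
  have hcong : ∀ j ∈ Finset.range a,
      c^(j+1) * qP q ν (a-j) * qP q w (j+1) * qBinom q a (j+1)
      = (1-ν) * (c^(j+1) * qP q (q*ν) (a-(j+1)) * qP q w (j+1) * qBinom q a (j+1)) := by
    intro j hj
    have hj' : j < a := Finset.mem_range.mp hj
    have e : a - j = (a - (j+1)) + 1 := by omega
    rw [e, qP_succ_bot]
    ring
  rw [Finset.sum_congr rfl hcong]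
  ring

lemma partB2 {q ν : ℝ} (a : ℕ) (c w : ℝ) :
    ∑ j ∈ Finset.range (a+1),
      c^(j+1) * qP q ν (a-j) * qP q w (j+1) * qBinom q a j
    = c*(1-w) * ∑ j ∈ Finset.range (a+1),
        c^j * qP q ν (a-j) * qP q (q*w) j * qBinom q a j := by
  rw [Finset.mul_sum]
  apply Finset.sum_congr rfl
  intro j _
  rw [qP_succ_bot q w j]
  ring

lemma partB1 {q ν : ℝ} (a s : ℕ) (w : ℝ) :
    ∑ j ∈ Finset.range (a+1),
      (q^(s+1)*ν)^(j+1) * q^(a-j) * qP q ν (a-j) * qP q w (j+1) * qBinom q a j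
    = q^(s+1+a)*ν*(1-w) * ∑ j ∈ Finset.range (a+1),
        (q^s*ν)^j * qP q ν (a-j) * qP q (q*w) j * qBinom q a j := by
  rw [Finset.mul_sum]
  apply Finset.sum_congr rfl
  intro j hj
  have hj' : j < a + 1 := Finset.mem_range.mp hj
  obtain ⟨d, rfl⟩ : ∃ d, a = j + d := ⟨a - j, by omega⟩
  have e : j + d - j = d := by omega
  rw [e, qP_succ_bot q w j]
  ring

lemma wshift {q ν : ℝ} (hq : q ≠ 0) (k : ℕ) :
    q * (ν⁻¹ * (q^(k+1))⁻¹) = ν⁻¹ * (q^k)⁻¹ := by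
  rw [pow_succ, mul_inv,
    show q * (ν⁻¹ * ((q^k)⁻¹ * q⁻¹)) = ν⁻¹*(q^k)⁻¹ * (q * q⁻¹) from by ring,
    mul_inv_cancel₀ hq, mul_one]

lemma wshift2 {q ν : ℝ} (hq : q ≠ 0) (hν : ν ≠ 0) (k : ℕ) :
    (q*ν)⁻¹ * (q^k)⁻¹ = ν⁻¹ * (q^(k+1))⁻¹ := by
  rw [pow_succ, mul_inv, mul_inv]
  ring

/-- Recurrence for `s ≤ k`: uses Pascal 2. -/
lemma recR2 {q ν : ℝ} (hq0 : 0 < q) (hq1 : q < 1) (hν : ν ≠ 0) (a k s : ℕ) :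
    ∑ j ∈ Finset.range (a+1+1),
      (q^s*ν)^j * qP q ν (a+1-j) * qP q (ν⁻¹ * (q^(k+1))⁻¹) j * qBinom q (a+1) j
    = (1-ν) * (∑ j ∈ Finset.range (a+1),
        (q^s*(q*ν))^j * qP q (q*ν) (a-j) * qP q ((q*ν)⁻¹ * (q^k)⁻¹) j * qBinom q a j)
      + (q^s*ν*(1 - ν⁻¹ * (q^(k+1))⁻¹)) * ∑ j ∈ Finset.range (a+1),
        (q^s*ν)^j * qP q ν (a-j) * qP q (ν⁻¹ * (q^k)⁻¹) j * qBinom q a j := by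
  set w : ℝ := ν⁻¹ * (q^(k+1))⁻¹ with hw
  rw [Finset.sum_range_succ']
  have h0 : (q^s*ν)^0 * qP q ν (a+1-0) * qP q w 0 * qBinom q (a+1) 0 = qP q ν (a+1) := by
    rw [pow_zero, Nat.sub_zero, qP_zero, qBinom_zero hq0 hq1]; ring
  rw [h0]
  have hcong : ∀ j ∈ Finset.range (a+1),
      (q^s*ν)^(j+1) * qP q ν (a+1-(j+1)) * qP q w (j+1) * qBinom q (a+1) (j+1)
      = (q^s*(q*ν))^(j+1) * qP q ν (a-j) * qP q w (j+1) * qBinom q a (j+1)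
        + (q^s*ν)^(j+1) * qP q ν (a-j) * qP q w (j+1) * qBinom q a j := by
    intro j _
    rw [qBinom_pascal2 hq0 hq1 a j, Nat.add_sub_add_right]
    ring
  rw [Finset.sum_congr rfl hcong, Finset.sum_add_distrib]
  have hA := partA hq0 hq1 (ν := ν) a (q^s*(q*ν)) w
  have hB := partB2 (q := q) (ν := ν) a (q^s*ν) w
  rw [wshift2 hq0.ne' hν k, ← hw]
  rw [hw, wshift hq0.ne' k, ← hw] at hB
  linear_combination hA + hB

/-- Recurrence for `s = k`: uses Pascal 1. -/
lemma recR1 {q ν : ℝ} (hq0 : 0 < q) (hq1 : q < 1) (hν : ν ≠ 0) (a k s : ℕ) :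
    ∑ j ∈ Finset.range (a+1+1),
      (q^(s+1)*ν)^j * qP q ν (a+1-j) * qP q (ν⁻¹ * (q^(k+1))⁻¹) j * qBinom q (a+1) j
    = (1-ν) * (∑ j ∈ Finset.range (a+1),
        (q^s*(q*ν))^j * qP q (q*ν) (a-j) * qP q ((q*ν)⁻¹ * (q^k)⁻¹) j * qBinom q a j)
      + (q^(s+1+a)*ν*(1 - ν⁻¹ * (q^(k+1))⁻¹)) * ∑ j ∈ Finset.range (a+1),
        (q^s*ν)^j * qP q ν (a-j) * qP q (ν⁻¹ * (q^k)⁻¹) j * qBinom q a j := by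
  set w : ℝ := ν⁻¹ * (q^(k+1))⁻¹ with hw
  rw [Finset.sum_range_succ']
  have h0 : (q^(s+1)*ν)^0 * qP q ν (a+1-0) * qP q w 0 * qBinom q (a+1) 0 = qP q ν (a+1) := by
    rw [pow_zero, Nat.sub_zero, qP_zero, qBinom_zero hq0 hq1]; ring
  rw [h0]
  have hcong : ∀ j ∈ Finset.range (a+1),
      (q^(s+1)*ν)^(j+1) * qP q ν (a+1-(j+1)) * qP q w (j+1) * qBinom q (a+1) (j+1)
      = (q^s*(q*ν))^(j+1) * qP q ν (a-j) * qP q w (j+1) * qBinom q a (j+1)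
        + (q^(s+1)*ν)^(j+1) * q^(a-j) * qP q ν (a-j) * qP q w (j+1) * qBinom q a j := by
    intro j _
    rw [qBinom_pascal1 hq0 hq1 a j, Nat.add_sub_add_right]
    ring
  rw [Finset.sum_congr rfl hcong, Finset.sum_add_distrib]
  have hA := partA hq0 hq1 (ν := ν) a (q^s*(q*ν)) w
  have hB := partB1 (q := q) (ν := ν) a s w
  rw [wshift2 hq0.ne' hν k, ← hw]
  rw [hw, wshift hq0.ne' k, ← hw] at hB
  linear_combination hA + hB

/-- Base recurrence at `k = s = 0`. -/
lemma recR3 {q ν : ℝ} (hq0 : 0 < q) (hq1 : q < 1) (hν : ν ≠ 0) (a : ℕ) :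
    ∑ j ∈ Finset.range (a+1+1),
      ν^j * qP q ν (a+1-j) * qP q ν⁻¹ j * qBinom q (a+1) j
    = ν*(1-q^a) * ∑ j ∈ Finset.range (a+1),
        ν^j * qP q ν (a-j) * qP q ν⁻¹ j * qBinom q a j := by
  rw [Finset.sum_range_succ']
  have h0 : ν^0 * qP q ν (a+1-0) * qP q ν⁻¹ 0 * qBinom q (a+1) 0 = qP q ν (a+1) := by
    rw [pow_zero, Nat.sub_zero, qP_zero, qBinom_zero hq0 hq1]; ring
  rw [h0]
  have hcong : ∀ j ∈ Finset.range (a+1),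
      ν^(j+1) * qP q ν (a+1-(j+1)) * qP q ν⁻¹ (j+1) * qBinom q (a+1) (j+1)
      = (q*ν)^(j+1) * qP q ν (a-j) * qP q ν⁻¹ (j+1) * qBinom q a (j+1)
        + ν^(j+1) * qP q ν (a-j) * qP q ν⁻¹ (j+1) * qBinom q a j := by
    intro j _
    rw [qBinom_pascal2 hq0 hq1 a j, Nat.add_sub_add_right]
    ring
  rw [Finset.sum_congr rfl hcong, Finset.sum_add_distrib]
  -- the S2 part
  have hS2 : ∑ j ∈ Finset.range (a+1),
      ν^(j+1) * qP q ν (a-j) * qP q ν⁻¹ (j+1) * qBinom q a j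
      = ν * (∑ j ∈ Finset.range (a+1), ν^j * qP q ν (a-j) * qP q ν⁻¹ j * qBinom q a j)
        - ∑ j ∈ Finset.range (a+1), (q*ν)^j * qP q ν (a-j) * qP q ν⁻¹ j * qBinom q a j := by
    rw [Finset.mul_sum, ← Finset.sum_sub_distrib]
    apply Finset.sum_congr rfl
    intro j _
    rw [qP_succ_top q ν⁻¹ j]
    have hpow : ν^(j+1) * ν⁻¹ = ν^j := by
      rw [pow_succ, mul_assoc, mul_inv_cancel₀ hν, mul_one]
    linear_combination (-(q^j * (qP q ν (a-j) * qP q ν⁻¹ j * qBinom q a j))) * hpow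
  -- the S1 part
  have hU : ∑ j ∈ Finset.range (a+1+1),
      (q*ν)^j * qP q ν (a+1-j) * qP q ν⁻¹ j * qBinom q a j
      = (∑ j ∈ Finset.range (a+1),
          (q*ν)^(j+1) * qP q ν (a-j) * qP q ν⁻¹ (j+1) * qBinom q a (j+1)) + qP q ν (a+1) := by
    rw [Finset.sum_range_succ']
    congr 1
    · apply Finset.sum_congr rfl
      intro j _
      rw [Nat.add_sub_add_right]
    · rw [pow_zero, Nat.sub_zero, qP_zero, qBinom_zero hq0 hq1]; ring
  have hU2 : ∑ j ∈ Finset.range (a+1+1),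
      (q*ν)^j * qP q ν (a+1-j) * qP q ν⁻¹ j * qBinom q a j
      = (∑ j ∈ Finset.range (a+1), (q*ν)^j * qP q ν (a-j) * qP q ν⁻¹ j * qBinom q a j)
        - ν * q^a * ∑ j ∈ Finset.range (a+1), ν^j * qP q ν (a-j) * qP q ν⁻¹ j * qBinom q a j := by
    rw [Finset.sum_range_succ, qBinom_of_gt q (by omega : a < a + 1)]
    rw [Finset.mul_sum, ← Finset.sum_sub_distrib]
    have : ∀ j ∈ Finset.range (a+1),
        (q*ν)^j * qP q ν (a+1-j) * qP q ν⁻¹ j * qBinom q a j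
        = (q*ν)^j * qP q ν (a-j) * qP q ν⁻¹ j * qBinom q a j
          - ν * q^a * (ν^j * qP q ν (a-j) * qP q ν⁻¹ j * qBinom q a j) := by
      intro j hj
      have hj' : j < a + 1 := Finset.mem_range.mp hj
      obtain ⟨d, rfl⟩ : ∃ d, a = j + d := ⟨a - j, by omega⟩
      have e1 : j + d + 1 - j = d + 1 := by omega
      have e2 : j + d - j = d := by omega
      rw [e1, e2, qP_succ_top q ν d]
      ring
    rw [Finset.sum_congr rfl this]
    ring
  linear_combination hS2 + hU2 - hU

lemma main_aux {q : ℝ} (hq0 : 0 < q) (hq1 : q < 1) :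
    ∀ a k s : ℕ, ∀ ν : ℝ, ν ≠ 0 → s ≤ k → k < a →
    ∑ j ∈ Finset.range (a+1),
      (q^s*ν)^j * qP q ν (a-j) * qP q (ν⁻¹ * (q^k)⁻¹) j * qBinom q a j = 0 := by
  intro a
  induction a with
  | zero => intro k s ν _ _ h; omega
  | succ a ih =>
    intro k s ν hν hsk hka
    cases k with
    | zero =>
      have hs : s = 0 := by omega
      subst hs
      simp only [pow_zero, one_mul, inv_one, mul_one]
      rw [recR3 hq0 hq1 hν a]
      rcases Nat.eq_zero_or_pos a with rfl | ha
      · norm_num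
      · have h := ih 0 0 ν hν le_rfl ha
        simp only [pow_zero, one_mul, inv_one, mul_one] at h
        rw [h]
        ring
    | succ k =>
      by_cases h : s ≤ k
      · rw [recR2 hq0 hq1 hν a k s,
          ih k s (q*ν) (mul_ne_zero hq0.ne' hν) h (by omega),
          ih k s ν hν h (by omega)]
        ring
      · have hs : s = k+1 := by omega
        subst hs
        rw [recR1 hq0 hq1 hν a k k,
          ih k k (q*ν) (mul_ne_zero hq0.ne' hν) le_rfl (by omega),
          ih k k ν hν le_rfl (by omega)]
        ring

/-- For `0 ≤ s ≤ k < a`, the sum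
`f_{a,k,s}(ν) = ∑_{j=0}^{a} (q^s ν)^j (ν;q)_{a-j} (ν^{-1}q^{-k};q)_j binom_q(a,j)`
vanishes. -/
theorem f_vanishes (q ν : ℝ) (hq0 : 0 < q) (hq1 : q < 1) (hν : ν ≠ 0)
    (a k s : ℕ) (hsk : s ≤ k) (hka : k < a) :
    ∑ j ∈ Finset.range (a + 1),
      (q ^ s * ν) ^ j * qP q ν (a - j) * qP q (ν⁻¹ * q ^ (-(k : ℤ))) j *
        qBinom q a j = 0 := by
  have h : (q : ℝ) ^ (-(k : ℤ)) = (q ^ k)⁻¹ := by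
    rw [zpow_neg, zpow_natCast]
  rw [h]
  exact main_aux hq0 hq1 a k s ν hν hsk hka
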